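/- Let f : M → N be a uniform quotient map between metric spaces that is both coarse Lipschitz and coarse co-Lipschitz. If N is uniformly discrete (i.e., inf{d(y,y') : y ≠ y', y,y' ∈ N} > 0), then f is a Lipschitz quotient map: there exist constants c, L > 0 such that for every x ∈ M and r > 0, B(f(x), c·r) ⊆ f(B(x,r)) ⊆ B(f(x), L·r). -/

import Mathlib

/-- A surjective uniform quotient map between metric spaces which is coarse Lipschitz and
coarse co-Lipschitz, with uniformly discrete target, is a Lipschitz quotient map. -/
theorem uniformQuotient_discrete_target_LipschitzQuotient
    {M N : Type*} [MetricSpace M] [MetricSpace N]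
    (f : M → N) (hsurj : Function.Surjective f)
    (ω Ω : ℝ → ℝ) (hωmono : Monotone ω) (hΩmono : Monotone Ω)
    (hωpos : ∀ r : ℝ, 0 < r → 0 < ω r)
    (hΩ0 : Filter.Tendsto Ω (nhdsWithin 0 (Set.Ioi 0)) (nhds 0))
    (hquot : ∀ (x : M) (r : ℝ), 0 < r →
      Metric.closedBall (f x) (ω r) ⊆ f '' Metric.closedBall x r ∧
      f '' Metric.closedBall x r ⊆ Metric.closedBall (f x) (Ω r))
    (hcoarseLip : ∀ δ : ℝ, 0 < δ → ∃ L : ℝ, 0 < L ∧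
      ∀ x x' : M, δ ≤ dist x x' → dist (f x) (f x') ≤ L * dist x x')
    (hcoarseCoLip : ∀ δ : ℝ, 0 < δ → ∃ c : ℝ, 0 < c ∧
      ∀ R : ℝ, δ ≤ R → ∀ y y' : N, dist y y' ≤ c * R →
        ∀ x : M, f x = y → ∃ x' : M, f x' = y' ∧ dist x x' ≤ R)
    (hdiscrete : ∃ θ : ℝ, 0 < θ ∧ ∀ y y' : N, y ≠ y' → θ ≤ dist y y') :
    ∃ c L : ℝ, 0 < c ∧ 0 < L ∧ ∀ (x : M) (r : ℝ), 0 < r →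
      Metric.closedBall (f x) (c * r) ⊆ f '' Metric.closedBall x r ∧
      f '' Metric.closedBall x r ⊆ Metric.closedBall (f x) (L * r) := by
  obtain ⟨θ, hθ, hdisc⟩ := hdiscrete
  have h1 : ∀ᶠ r in nhdsWithin 0 (Set.Ioi 0), Ω r < θ := hΩ0.eventually (gt_mem_nhds hθ)
  obtain ⟨r₀, hΩr₀, hr₀⟩ := (h1.and self_mem_nhdsWithin).exists
  have hr₀pos : 0 < r₀ := hr₀
  obtain ⟨L₁, hL₁, hLip⟩ := hcoarseLip r₀ hr₀pos
  obtain ⟨c₁, hc₁, hCoLip⟩ := hcoarseCoLip r₀ hr₀pos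
  have hclose : ∀ y y' : N, dist y y' < θ → y = y' := by
    intro y y' h
    by_contra hne
    exact absurd (hdisc y y' hne) (not_le.2 h)
  refine ⟨min c₁ (θ / (2 * r₀)), max L₁ 1, lt_min hc₁ (by positivity),
    lt_of_lt_of_le one_pos (le_max_right _ _), ?_⟩
  intro x r hr
  constructor
  · intro y hy
    rw [Metric.mem_closedBall] at hy
    rcases le_or_gt r₀ r with hcase | hcase
    · have hdy : dist (f x) y ≤ c₁ * r := by
        rw [dist_comm]
        exact hy.trans (mul_le_mul_of_nonneg_right (min_le_left _ _) hr.le)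
      obtain ⟨x', hx', hd⟩ := hCoLip r hcase (f x) y hdy x rfl
      exact ⟨x', Metric.mem_closedBall.2 (by rwa [dist_comm]), hx'⟩
    · have : dist y (f x) < θ := by
        refine lt_of_le_of_lt (hy.trans ?_) (half_lt_self hθ)
        calc min c₁ (θ / (2 * r₀)) * r ≤ θ / (2 * r₀) * r₀ := by
              apply mul_le_mul (min_le_right _ _) hcase.le hr.le
              positivity
          _ = θ / 2 := by field_simp
      have : y = f x := hclose _ _ this
      exact ⟨x, Metric.mem_closedBall_self hr.le, this.symm⟩
  · rintro z ⟨x', hx', rfl⟩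
    rw [Metric.mem_closedBall] at hx' ⊢
    rcases le_or_gt r₀ (dist x x') with hcase | hcase
    · rw [dist_comm]
      calc dist (f x) (f x') ≤ L₁ * dist x x' := hLip x x' hcase
        _ ≤ max L₁ 1 * r := by
            apply mul_le_mul (le_max_left _ _) (by rwa [dist_comm] at hx')
              dist_nonneg (le_trans zero_le_one (le_max_right _ _))
    · have hmem : f x' ∈ Metric.closedBall (f x) (Ω r₀) :=
        (hquot x r₀ hr₀pos).2 ⟨x', Metric.mem_closedBall.2 (by rw [dist_comm]; exact hcase.le), rfl⟩
      have : f x' = f x := hclose _ _ ((Metric.mem_closedBall.1 hmem).trans_lt hΩr₀)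
      rw [this, dist_self]
      have : (0:ℝ) < max L₁ 1 * r := by positivity
      exact this.le
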